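/- arXiv:2603.14178 — 4 statements merged into one kernel-verified Lean document; each statement's English description precedes it below -/
import Mathlib

section
/- Interface coercivity (lower bound): the hybrid energy E_α(u) = E_cc(v) + 2 E_cd(v,a) + E_dd(a) satisfies E_α(u) ≥ [v]²_{H^α(0,1)} + 2c₁ Σ_{k=2}^{N+1} |a_k - v̄|² + 2c₁ N ‖v - v̄‖²_{L²(0,1)}, with c₁ = (N+1)^{-(1+2α)} and v̄ = ∫_0^1 v dx. -/
open Finset Set MeasureTheory

/-- Gagliardo (continuous–continuous) part of the hybrid energy. -/
noncomputable def Ecc (α : ℝ) (v : ℝ → ℝ) : ℝ :=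
  ∫ x in Set.Ioc (0 : ℝ) 1, ∫ y in Set.Ioc (0 : ℝ) 1,
    (v x - v y) ^ 2 / |x - y| ^ (1 + 2 * α)

/-- Continuous–discrete (interface) part of the hybrid energy. -/
noncomputable def Ecd (N : ℕ) (α : ℝ) (v : ℝ → ℝ) (a : ℕ → ℝ) : ℝ :=
  ∑ k ∈ Finset.Icc 2 (N + 1),
    ∫ x in Set.Ioc (0 : ℝ) 1, (a k - v x) ^ 2 / |(k : ℝ) - x| ^ (1 + 2 * α)

/-- Discrete–discrete part of the hybrid energy. -/
noncomputable def Edd (N : ℕ) (α : ℝ) (a : ℕ → ℝ) : ℝ :=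
  ∑ i ∈ Finset.Icc 2 (N + 1), ∑ j ∈ Finset.Icc 2 (N + 1),
    if i = j then 0 else (a i - a j) ^ 2 / |(i : ℝ) - (j : ℝ)| ^ (1 + 2 * α)

/-- Interface coercivity (lower bound): with `c₁ = (N+1)^{-(1+2α)}` and `v̄ = ∫₀¹ v`,
`E_α(u) = E_cc + 2E_cd + E_dd ≥ [v]² + 2c₁ Σ_k |a_k - v̄|² + 2c₁N ‖v - v̄‖²`. -/
theorem stmt_7 (N : ℕ) (hN : 2 ≤ N) (α : ℝ) (hα : 0 < α) (hα1 : α < 1)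
    (v : ℝ → ℝ) (a : ℕ → ℝ)
    (hv1 : IntegrableOn v (Set.Ioc (0 : ℝ) 1))
    (hv2 : IntegrableOn (fun x => (v x) ^ 2) (Set.Ioc (0 : ℝ) 1)) :
    Ecc α v + 2 * Ecd N α v a + Edd N α a ≥
      Ecc α v +
        2 * (1 / ((N : ℝ) + 1) ^ (1 + 2 * α)) *
          (∑ k ∈ Finset.Icc 2 (N + 1), (a k - ∫ x in Set.Ioc (0 : ℝ) 1, v x) ^ 2) +
        2 * (1 / ((N : ℝ) + 1) ^ (1 + 2 * α)) * (N : ℝ) *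
          ∫ x in Set.Ioc (0 : ℝ) 1, (v x - ∫ y in Set.Ioc (0 : ℝ) 1, v y) ^ 2 := by
  set p : ℝ := 1 + 2 * α with hpdef
  have hp : 0 < p := by positivity
  set vb : ℝ := ∫ x in Set.Ioc (0 : ℝ) 1, v x with hvb
  set c : ℝ := 1 / ((N : ℝ) + 1) ^ p with hc
  have hNp : (0:ℝ) < ((N : ℝ) + 1) ^ p := Real.rpow_pos_of_pos (by positivity) p
  have hcpos : 0 < c := by positivity
  -- measure of Ioc 0 1 is 1
  have hμ : (MeasureTheory.volume (Set.Ioc (0:ℝ) 1)).toReal = 1 := by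
    simp [Real.volume_Ioc]
  have hvm : AEStronglyMeasurable v (volume.restrict (Set.Ioc (0:ℝ) 1)) :=
    hv1.aestronglyMeasurable
  -- integrability of (b - v x)^2
  have hInt1 : ∀ b : ℝ, IntegrableOn (fun x => (b - v x) ^ 2) (Set.Ioc (0:ℝ) 1) := by
    intro b
    have : (fun x => (b - v x) ^ 2) = fun x => (b^2 - (2*b) * v x) + (v x)^2 := by
      funext x; ring
    rw [this]
    exact (((integrable_const _).sub (hv1.const_mul (2*b)))).add hv2
  -- integral expansion
  have hexp : ∀ b : ℝ, (∫ x in Set.Ioc (0:ℝ) 1, (b - v x) ^ 2)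
      = b^2 - 2*b*vb + ∫ x in Set.Ioc (0:ℝ) 1, (v x)^2 := by
    intro b
    have h1 : (fun x => (b - v x) ^ 2) = fun x => (b^2 - (2*b) * v x) + (v x)^2 := by
      funext x; ring
    have e1 : (∫ x in Set.Ioc (0:ℝ) 1, (b ^ 2 - 2 * b * v x + v x ^ 2))
        = (∫ x in Set.Ioc (0:ℝ) 1, (b ^ 2 - 2 * b * v x)) + ∫ x in Set.Ioc (0:ℝ) 1, v x ^ 2 :=
      MeasureTheory.integral_add ((integrable_const _).sub (hv1.const_mul (2*b))) hv2
    have e2 : (∫ x in Set.Ioc (0:ℝ) 1, (b ^ 2 - 2 * b * v x))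
        = (∫ x in Set.Ioc (0:ℝ) 1, (b^2 : ℝ)) - ∫ x in Set.Ioc (0:ℝ) 1, 2 * b * v x :=
      MeasureTheory.integral_sub (integrable_const _) (hv1.const_mul (2*b))
    rw [h1, e1, e2, MeasureTheory.integral_const, MeasureTheory.integral_const_mul,
      MeasureTheory.measureReal_restrict_apply_univ, MeasureTheory.measureReal_def, hμ, smul_eq_mul]
    rw [hvb]; ring
  set J : ℝ := ∫ x in Set.Ioc (0:ℝ) 1, (v x)^2 with hJ
  set I : ℝ := ∫ x in Set.Ioc (0:ℝ) 1, (v x - vb)^2 with hI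
  have hIeq : I = J - vb^2 := by
    have h1 : (fun x => (v x - vb) ^ 2) = fun x => (vb - v x) ^ 2 := by
      funext x; ring
    rw [hI, h1, hexp vb]; ring
  -- key per-k bound
  have hkey : ∀ k ∈ Finset.Icc 2 (N+1),
      c * ((a k - vb)^2 + I) ≤
      ∫ x in Set.Ioc (0:ℝ) 1, (a k - v x) ^ 2 / |(k : ℝ) - x| ^ p := by
    intro k hk
    rw [Finset.mem_Icc] at hk
    have hk2 : (2:ℝ) ≤ (k:ℝ) := by exact_mod_cast hk.1
    have hkN : (k:ℝ) ≤ (N:ℝ) + 1 := by exact_mod_cast hk.2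
    -- pointwise facts on Ioc 0 1
    have hfacts : ∀ x ∈ Set.Ioc (0:ℝ) 1,
        (1:ℝ) ≤ |(k : ℝ) - x| ^ p ∧ |(k : ℝ) - x| ^ p ≤ ((N:ℝ)+1) ^ p := by
      intro x hx
      have hx0 : 0 < x := hx.1
      have hx1 : x ≤ 1 := hx.2
      have h1 : (1:ℝ) ≤ (k:ℝ) - x := by linarith
      have habs : |(k : ℝ) - x| = (k:ℝ) - x := abs_of_nonneg (by linarith)
      constructor
      · calc (1:ℝ) = (1:ℝ) ^ p := (Real.one_rpow p).symm
          _ ≤ |(k : ℝ) - x| ^ p :=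
            Real.rpow_le_rpow (by norm_num) (by rw [habs]; exact h1) hp.le
      · exact Real.rpow_le_rpow (abs_nonneg _) (by rw [habs]; linarith) hp.le
    -- integrability of the weighted integrand
    have hmeas : AEStronglyMeasurable
        (fun x => (a k - v x) ^ 2 / |(k : ℝ) - x| ^ p)
        (volume.restrict (Set.Ioc (0:ℝ) 1)) := by
      have heq : (fun x => (a k - v x) ^ 2 / |(k : ℝ) - x| ^ p)
          = fun x => (a k - v x) ^ 2 * (|(k : ℝ) - x| ^ p)⁻¹ :=
        funext fun x => div_eq_mul_inv _ _
      rw [heq]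
      have hcont : Continuous fun x : ℝ => |(k : ℝ) - x| ^ p :=
        (Real.continuous_rpow_const hp.le).comp ((continuous_const.sub continuous_id).abs)
      exact (hInt1 (a k)).aestronglyMeasurable.mul hcont.measurable.inv.aestronglyMeasurable
    have hfint : IntegrableOn (fun x => (a k - v x) ^ 2 / |(k : ℝ) - x| ^ p)
        (Set.Ioc (0:ℝ) 1) := by
      refine MeasureTheory.Integrable.mono (hInt1 (a k)) hmeas ?_
      filter_upwards [MeasureTheory.ae_restrict_mem measurableSet_Ioc] with x hx
      have h := (hfacts x hx).1
      have hden : (0:ℝ) < |(k : ℝ) - x| ^ p := by linarith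
      rw [Real.norm_eq_abs, Real.norm_eq_abs,
        abs_of_nonneg (div_nonneg (sq_nonneg _) hden.le),
        abs_of_nonneg (sq_nonneg (a k - v x))]
      exact div_le_self (sq_nonneg _) h
    -- pointwise inequality and integral monotonicity
    have hmono : (∫ x in Set.Ioc (0:ℝ) 1, c * (a k - v x) ^ 2)
        ≤ ∫ x in Set.Ioc (0:ℝ) 1, (a k - v x) ^ 2 / |(k : ℝ) - x| ^ p := by
      refine MeasureTheory.setIntegral_mono_on ((hInt1 (a k)).const_mul c) hfint
        measurableSet_Ioc ?_
      intro x hx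
      obtain ⟨h1, h2⟩ := hfacts x hx
      have hden : (0:ℝ) < |(k : ℝ) - x| ^ p := by linarith
      have hinv : (((N:ℝ)+1) ^ p)⁻¹ ≤ (|(k : ℝ) - x| ^ p)⁻¹ :=
        inv_anti₀ hden h2
      calc c * (a k - v x) ^ 2 = (a k - v x) ^ 2 * (((N:ℝ)+1) ^ p)⁻¹ := by
            rw [hc]; ring
        _ ≤ (a k - v x) ^ 2 * (|(k : ℝ) - x| ^ p)⁻¹ :=
            mul_le_mul_of_nonneg_left hinv (sq_nonneg _)
        _ = (a k - v x) ^ 2 / |(k : ℝ) - x| ^ p := by rw [div_eq_mul_inv]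
    calc c * ((a k - vb)^2 + I)
        = c * ∫ x in Set.Ioc (0:ℝ) 1, (a k - v x) ^ 2 := by
          rw [hexp (a k), hIeq]; ring
      _ = ∫ x in Set.Ioc (0:ℝ) 1, c * (a k - v x) ^ 2 := by
          rw [MeasureTheory.integral_const_mul]
      _ ≤ _ := hmono
  -- sum the key bound
  have hsum : ∑ k ∈ Finset.Icc 2 (N+1), (c * ((a k - vb)^2 + I)) ≤ Ecd N α v a :=
    Finset.sum_le_sum hkey
  have hcard : (Finset.Icc 2 (N+1)).card = N := by
    rw [Nat.card_Icc]; omega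
  have hsum' : ∑ k ∈ Finset.Icc 2 (N+1), (c * ((a k - vb)^2 + I))
      = c * (∑ k ∈ Finset.Icc 2 (N+1), (a k - vb)^2) + c * (N:ℝ) * I := by
    have : ∀ k, c * ((a k - vb)^2 + I) = c * (a k - vb)^2 + c * I := fun k => by ring
    simp only [this, Finset.sum_add_distrib, Finset.sum_const, hcard, nsmul_eq_mul,
      Finset.mul_sum]
    ring
  -- Edd is nonnegative
  have hEdd : 0 ≤ Edd N α a := by
    refine Finset.sum_nonneg fun i _ => Finset.sum_nonneg fun j _ => ?_
    split
    · exact le_refl 0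
    · exact div_nonneg (sq_nonneg _) (Real.rpow_nonneg (abs_nonneg _) _)
  have hEcd : c * (∑ k ∈ Finset.Icc 2 (N+1), (a k - vb)^2) + c * (N:ℝ) * I
      ≤ Ecd N α v a := by rw [← hsum']; exact hsum
  linarith
end

section
/- Interface coercivity (upper bound): there exists a constant C₂ > 0 depending only on α and N such that E_α(u) = E_cc(v) + 2E_cd(v,a) + E_dd(a) ≤ C₂ ([v]²_{H^α(0,1)} + ‖v - v̄‖²_{L²(0,1)} + Σ_{k=2}^{N+1} |a_k - v̄|²). -/
open Finset Set MeasureTheory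

/-- Interface coercivity (upper bound): there is `C₂ > 0`, depending only on `α` and `N`,
with `E_α(u) ≤ C₂([v]² + ‖v - v̄‖² + Σ_k |a_k - v̄|²)`. -/
theorem stmt_8 (N : ℕ) (hN : 2 ≤ N) (α : ℝ) (hα : 0 < α) (hα1 : α < 1) :
    ∃ C₂ : ℝ, 0 < C₂ ∧ ∀ (v : ℝ → ℝ) (a : ℕ → ℝ),
      IntegrableOn v (Set.Ioc (0 : ℝ) 1) →
      IntegrableOn (fun x => (v x) ^ 2) (Set.Ioc (0 : ℝ) 1) →
      Ecc α v + 2 * Ecd N α v a + Edd N α a ≤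
        C₂ * (Ecc α v +
          (∫ x in Set.Ioc (0 : ℝ) 1, (v x - ∫ y in Set.Ioc (0 : ℝ) 1, v y) ^ 2) +
          ∑ k ∈ Finset.Icc 2 (N + 1), (a k - ∫ x in Set.Ioc (0 : ℝ) 1, v x) ^ 2) := by
  refine ⟨4 * N + 4, by positivity, ?_⟩
  intro v a hv hv2
  set m := ∫ x in Set.Ioc (0 : ℝ) 1, v x with hm
  set L := ∫ x in Set.Ioc (0 : ℝ) 1, (v x - m) ^ 2 with hL
  set S := ∑ k ∈ Finset.Icc 2 (N + 1), (a k - m) ^ 2 with hS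
  have hmeas : (volume (Set.Ioc (0 : ℝ) 1)).toReal = 1 := by simp
  have hint : ∀ c : ℝ, IntegrableOn (fun x => (v x - c) ^ 2) (Set.Ioc (0 : ℝ) 1) := by
    intro c
    have heq : (fun x => (v x - c) ^ 2) = fun x => (v x) ^ 2 - (2 * c) * v x + c ^ 2 := by
      funext x; ring
    rw [heq]
    exact (hv2.sub (hv.const_mul (2 * c))).add
      (integrableOn_const (by simp))
  have hLnn : 0 ≤ L := integral_nonneg fun x => sq_nonneg _
  have hSnn : 0 ≤ S := Finset.sum_nonneg fun k _ => sq_nonneg _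
  have hEcc : 0 ≤ Ecc α v := by
    apply integral_nonneg; intro x
    apply integral_nonneg; intro y
    positivity
  have hcard : (Finset.Icc 2 (N + 1)).card = N := by
    rw [Nat.card_Icc]; omega
  -- Ecd bound
  have hEcd : Ecd N α v a ≤ 2 * S + 2 * N * L := by
    have hk : ∀ k ∈ Finset.Icc 2 (N + 1),
        (∫ x in Set.Ioc (0 : ℝ) 1, (a k - v x) ^ 2 / |(k : ℝ) - x| ^ (1 + 2 * α))
          ≤ 2 * (a k - m) ^ 2 + 2 * L := by
      intro k hkm
      have hk2 : (2 : ℝ) ≤ (k : ℝ) := by exact_mod_cast (Finset.mem_Icc.1 hkm).1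
      have h1 : (∫ x in Set.Ioc (0 : ℝ) 1, (a k - v x) ^ 2 / |(k : ℝ) - x| ^ (1 + 2 * α))
          ≤ ∫ x in Set.Ioc (0 : ℝ) 1, (a k - v x) ^ 2 := by
        apply integral_mono_of_nonneg
        · filter_upwards with x; positivity
        · have := hint (a k)
          have heq : (fun x => (v x - a k) ^ 2) = fun x => (a k - v x) ^ 2 := by
            funext x; ring
          rwa [heq] at this
        · filter_upwards [ae_restrict_mem measurableSet_Ioc] with x hx
          have hd : (1 : ℝ) ≤ |(k : ℝ) - x| ^ (1 + 2 * α) := by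
            apply Real.one_le_rpow
            · rw [abs_of_nonneg (by linarith [hx.2])]; linarith [hx.2]
            · linarith
          exact div_le_self (sq_nonneg _) hd
      have h2 : (∫ x in Set.Ioc (0 : ℝ) 1, (a k - v x) ^ 2)
          ≤ ∫ x in Set.Ioc (0 : ℝ) 1, (2 * (a k - m) ^ 2 + 2 * (v x - m) ^ 2) := by
        apply integral_mono_of_nonneg
        · filter_upwards with x; positivity
        · exact (integrableOn_const (by simp)).add ((hint m).const_mul 2)
        · filter_upwards with x
          nlinarith [sq_nonneg (a k + v x - 2 * m)]
      have h3 : (∫ x in Set.Ioc (0 : ℝ) 1, (2 * (a k - m) ^ 2 + 2 * (v x - m) ^ 2))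
          = 2 * (a k - m) ^ 2 + 2 * L := by
        rw [integral_add (by exact integrableOn_const (C := 2 * (a k - m) ^ 2) (s := Set.Ioc (0 : ℝ) 1) (μ := volume) (by simp)) ((hint m).const_mul 2),
          integral_const, measureReal_restrict_apply_univ, measureReal_def, hmeas, smul_eq_mul, one_mul,
          MeasureTheory.integral_const_mul]
      linarith
    calc Ecd N α v a ≤ ∑ k ∈ Finset.Icc 2 (N + 1), (2 * (a k - m) ^ 2 + 2 * L) :=
          Finset.sum_le_sum hk
      _ = 2 * S + 2 * N * L := by
          rw [Finset.sum_add_distrib, ← Finset.mul_sum, Finset.sum_const, hcard]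
          ring
  -- Edd bound
  have hEdd : Edd N α a ≤ 4 * N * S := by
    have hij : ∀ i ∈ Finset.Icc 2 (N + 1), ∀ j ∈ Finset.Icc 2 (N + 1),
        (if i = j then (0:ℝ) else (a i - a j) ^ 2 / |(i : ℝ) - (j : ℝ)| ^ (1 + 2 * α))
          ≤ 2 * (a i - m) ^ 2 + 2 * (a j - m) ^ 2 := by
      intro i _ j _
      by_cases h : i = j
      · simp [h]; positivity
      · simp only [h, if_false]
        have h1 : (1 : ℤ) ≤ |(i : ℤ) - (j : ℤ)| :=
          Int.one_le_abs (sub_ne_zero.2 (by exact_mod_cast h))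
        have h2 : (1 : ℝ) ≤ |(i : ℝ) - (j : ℝ)| := by exact_mod_cast h1
        have hd : (1 : ℝ) ≤ |(i : ℝ) - (j : ℝ)| ^ (1 + 2 * α) :=
          Real.one_le_rpow h2 (by linarith)
        have := div_le_self (sq_nonneg (a i - a j)) hd
        nlinarith [sq_nonneg (a i + a j - 2 * m)]
    calc Edd N α a ≤ ∑ i ∈ Finset.Icc 2 (N + 1), ∑ j ∈ Finset.Icc 2 (N + 1),
          (2 * (a i - m) ^ 2 + 2 * (a j - m) ^ 2) :=
          Finset.sum_le_sum fun i hi => Finset.sum_le_sum (hij i hi)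
      _ = 4 * N * S := by
          simp only [Finset.sum_add_distrib, Finset.sum_const, hcard, nsmul_eq_mul,
            ← Finset.mul_sum, ← hS]
          ring
  have hNR : (0:ℝ) ≤ (N:ℝ) := Nat.cast_nonneg N
  have key : Ecc α v + 2 * Ecd N α v a + Edd N α a ≤ (4 * N + 4) * (Ecc α v + L + S) := by
    nlinarith [mul_nonneg hNR hLnn, mul_nonneg hNR hSnn, mul_nonneg hNR hEcc]
  exact key
end

section
/- Hybrid Poincaré inequality: there exists C_P > 0 depending only on α and N such that for every u = (v, a_2,...,a_{N+1}) with v ∈ H^α(0,1), one has ‖v - v̄‖²_{L²(0,1)} + Σ_{k=2}^{N+1} |a_k - v̄|² ≤ C_P E_α(u), where v̄ = ∫_0^1 v dx. -/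
open Finset Set MeasureTheory

lemma vol_Ioc01 : (volume (Set.Ioc (0:ℝ) 1)).toReal = 1 := by
  simp [Real.volume_Ioc]

lemma integrable_sq_sub {v : ℝ → ℝ}
    (hv : IntegrableOn v (Set.Ioc (0:ℝ) 1))
    (hv2 : IntegrableOn (fun x => v x ^ 2) (Set.Ioc (0:ℝ) 1)) (c : ℝ) :
    IntegrableOn (fun x => (v x - c)^2) (Set.Ioc (0:ℝ) 1) := by
  have h : (fun x => (v x - c)^2) = fun x => (v x ^ 2 - (2*c) * v x) + c^2 := by
    funext x; ring
  rw [h]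
  exact (hv2.sub (hv.const_mul (2*c))).add
    (integrableOn_const measure_Ioc_lt_top.ne)

lemma int_sq_sub {v : ℝ → ℝ}
    (hv : IntegrableOn v (Set.Ioc (0:ℝ) 1))
    (hv2 : IntegrableOn (fun x => v x ^ 2) (Set.Ioc (0:ℝ) 1)) (c : ℝ) :
    ∫ x in Set.Ioc (0:ℝ) 1, (v x - c)^2 =
      (∫ x in Set.Ioc (0:ℝ) 1, v x ^ 2) - 2*c*(∫ x in Set.Ioc (0:ℝ) 1, v x) + c^2 := by
  have h : ∀ x : ℝ, (v x - c)^2 = (v x ^ 2 - (2*c) * v x) + c^2 := fun x => by ring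
  have h1 : IntegrableOn (fun x => v x ^ 2 - (2*c) * v x) (Set.Ioc (0:ℝ) 1) :=
    hv2.sub (hv.const_mul (2*c))
  have h2 : IntegrableOn (fun _ : ℝ => c^2) (Set.Ioc (0:ℝ) 1) :=
    integrableOn_const measure_Ioc_lt_top.ne
  simp_rw [h]
  rw [integral_add h1 h2, integral_sub hv2 (hv.const_mul (2*c)), integral_const_mul (2*c) v,
    setIntegral_const, Measure.real, vol_Ioc01, one_smul]

set_option maxHeartbeats 1000000 in
/-- Hybrid Poincaré inequality: there is `C_P > 0`, depending only on `α` and `N`, with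
`‖v - v̄‖²_{L²(0,1)} + Σ_k |a_k - v̄|² ≤ C_P E_α(u)`. -/
theorem stmt_9 (N : ℕ) (hN : 2 ≤ N) (α : ℝ) (hα : 0 < α) (hα1 : α < 1) :
    ∃ C_P : ℝ, 0 < C_P ∧ ∀ (v : ℝ → ℝ) (a : ℕ → ℝ),
      IntegrableOn v (Set.Ioc (0 : ℝ) 1) →
      IntegrableOn (fun x => (v x) ^ 2) (Set.Ioc (0 : ℝ) 1) →
      (∫ x in Set.Ioc (0 : ℝ) 1, (v x - ∫ y in Set.Ioc (0 : ℝ) 1, v y) ^ 2) +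
          (∑ k ∈ Finset.Icc 2 (N + 1), (a k - ∫ x in Set.Ioc (0 : ℝ) 1, v x) ^ 2) ≤
        C_P * (Ecc α v + 2 * Ecd N α v a + Edd N α a) := by
  set M : ℝ := ((N:ℝ)+2)^3 with hMdef
  have hM0 : (0:ℝ) < M := by positivity
  refine ⟨M, hM0, ?_⟩
  intro v a hv hv2
  set vbar : ℝ := ∫ x in Set.Ioc (0:ℝ) 1, v x with hvb
  -- bounds on the denominator
  have hD : ∀ k ∈ Finset.Icc 2 (N+1), ∀ x ∈ Set.Ioc (0:ℝ) 1,
      1 ≤ |(k:ℝ) - x| ^ (1+2*α) ∧ |(k:ℝ) - x| ^ (1+2*α) ≤ M := by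
    intro k hk x hx
    rw [Finset.mem_Icc] at hk
    have hk2 : (2:ℝ) ≤ (k:ℝ) := by exact_mod_cast hk.1
    have hkN : (k:ℝ) ≤ (N:ℝ)+1 := by exact_mod_cast hk.2
    have hx1 : 0 < x := hx.1
    have hx2 : x ≤ 1 := hx.2
    have hb : |(k:ℝ) - x| = (k:ℝ) - x := abs_of_nonneg (by linarith)
    have hb1 : (1:ℝ) ≤ |(k:ℝ) - x| := by rw [hb]; linarith
    constructor
    · calc (1:ℝ) = |(k:ℝ) - x| ^ (0:ℝ) := (Real.rpow_zero _).symm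
        _ ≤ |(k:ℝ) - x| ^ (1+2*α) :=
          Real.rpow_le_rpow_of_exponent_le hb1 (by linarith)
    · calc |(k:ℝ) - x| ^ (1+2*α) ≤ ((N:ℝ)+2) ^ (1+2*α) := by
            apply Real.rpow_le_rpow (abs_nonneg _) _ (by linarith)
            rw [hb]; linarith
        _ ≤ ((N:ℝ)+2) ^ (3:ℝ) :=
            Real.rpow_le_rpow_of_exponent_le (by linarith [Nat.cast_nonneg (α := ℝ) N]) (by linarith)
        _ = M := by
            rw [hMdef, show (3:ℝ) = ((3:ℕ):ℝ) by norm_num, Real.rpow_natCast]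
  -- integrability of the Ecd integrands
  have hvm : AEStronglyMeasurable v (volume.restrict (Set.Ioc (0:ℝ) 1)) :=
    hv.aestronglyMeasurable
  have hgint : ∀ k ∈ Finset.Icc 2 (N+1),
      IntegrableOn (fun x => (a k - v x) ^ 2 / |(k:ℝ) - x| ^ (1 + 2 * α))
        (Set.Ioc (0:ℝ) 1) := by
    intro k hk
    have hden : Continuous (fun x : ℝ => |(k:ℝ) - x| ^ (1+2*α)) :=
      ((continuous_const.sub continuous_id).abs).rpow_const
        (fun x => Or.inr (by linarith))
    have hgm : AEStronglyMeasurable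
        (fun x => (a k - v x) ^ 2 / |(k:ℝ) - x| ^ (1 + 2 * α))
        (volume.restrict (Set.Ioc (0:ℝ) 1)) :=
      (((aemeasurable_const.sub hv.aemeasurable).pow aemeasurable_const).div
        hden.measurable.aemeasurable).aestronglyMeasurable
    apply Integrable.mono (integrable_sq_sub hv hv2 (a k)) hgm
    filter_upwards [ae_restrict_mem measurableSet_Ioc] with x hx
    obtain ⟨hD1, _⟩ := hD k hk x hx
    have h0 : (0:ℝ) ≤ (a k - v x) ^ 2 / |(k:ℝ) - x| ^ (1 + 2 * α) :=
      div_nonneg (sq_nonneg _) (by linarith)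
    rw [Real.norm_eq_abs, Real.norm_eq_abs, abs_of_nonneg h0, abs_of_nonneg (sq_nonneg (v x - a k))]
    have := div_le_self (sq_nonneg (a k - v x)) hD1
    calc (a k - v x) ^ 2 / |(k:ℝ) - x| ^ (1 + 2 * α) ≤ (a k - v x) ^ 2 := this
      _ = (v x - a k) ^ 2 := by ring
  -- nonnegativity of the T_k
  have hTnn : ∀ k : ℕ, 0 ≤ ∫ x in Set.Ioc (0:ℝ) 1,
      (a k - v x) ^ 2 / |(k:ℝ) - x| ^ (1 + 2 * α) := by
    intro k
    apply setIntegral_nonneg measurableSet_Ioc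
    intro x _
    exact div_nonneg (sq_nonneg _) (Real.rpow_nonneg (abs_nonneg _) _)
  -- key bound : ∫ (v - a k)^2 ≤ M * T k
  have hTle : ∀ k ∈ Finset.Icc 2 (N+1),
      (∫ x in Set.Ioc (0:ℝ) 1, (v x - a k) ^ 2) ≤
        M * ∫ x in Set.Ioc (0:ℝ) 1, (a k - v x) ^ 2 / |(k:ℝ) - x| ^ (1 + 2 * α) := by
    intro k hk
    rw [← integral_const_mul M (fun x => (a k - v x) ^ 2 / |(k:ℝ) - x| ^ (1 + 2 * α))]
    apply setIntegral_mono_on (integrable_sq_sub hv hv2 (a k))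
      ((hgint k hk).const_mul M) measurableSet_Ioc
    intro x hx
    obtain ⟨hD1, hDM⟩ := hD k hk x hx
    have hDpos : (0:ℝ) < |(k:ℝ) - x| ^ (1 + 2 * α) := by linarith
    have hq : (0:ℝ) ≤ (a k - v x) ^ 2 / |(k:ℝ) - x| ^ (1 + 2 * α) :=
      div_nonneg (sq_nonneg _) hDpos.le
    calc (v x - a k) ^ 2 = (a k - v x) ^ 2 := by ring
      _ = |(k:ℝ) - x| ^ (1 + 2 * α) * ((a k - v x) ^ 2 / |(k:ℝ) - x| ^ (1 + 2 * α)) := by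
          field_simp
      _ ≤ M * ((a k - v x) ^ 2 / |(k:ℝ) - x| ^ (1 + 2 * α)) :=
          mul_le_mul_of_nonneg_right hDM hq
  -- variance inequality : vbar^2 ≤ ∫ v^2
  have hvar : vbar ^ 2 ≤ ∫ x in Set.Ioc (0:ℝ) 1, v x ^ 2 := by
    have h0 : 0 ≤ ∫ x in Set.Ioc (0:ℝ) 1, (v x - vbar)^2 :=
      setIntegral_nonneg measurableSet_Ioc (fun x _ => sq_nonneg _)
    rw [int_sq_sub hv hv2 vbar] at h0
    nlinarith
  have hA : ∀ k : ℕ, (a k - vbar) ^ 2 ≤ ∫ x in Set.Ioc (0:ℝ) 1, (v x - a k) ^ 2 := by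
    intro k
    rw [int_sq_sub hv hv2 (a k)]
    nlinarith
  have hB : (∫ x in Set.Ioc (0:ℝ) 1, (v x - vbar) ^ 2) ≤
      ∫ x in Set.Ioc (0:ℝ) 1, (v x - a 2) ^ 2 := by
    rw [int_sq_sub hv hv2 vbar, int_sq_sub hv hv2 (a 2)]
    nlinarith [sq_nonneg (a 2 - vbar)]
  -- Ecd bounds
  have h2mem : 2 ∈ Finset.Icc 2 (N+1) := by
    rw [Finset.mem_Icc]; omega
  have hEcd_nn : 0 ≤ Ecd N α v a := Finset.sum_nonneg fun k _ => hTnn k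
  have hT2le : (∫ x in Set.Ioc (0:ℝ) 1,
      (a 2 - v x) ^ 2 / |((2:ℕ):ℝ) - x| ^ (1 + 2 * α)) ≤ Ecd N α v a :=
    Finset.single_le_sum (fun k _ => hTnn k) h2mem
  have hleft : (∫ x in Set.Ioc (0:ℝ) 1, (v x - vbar) ^ 2) ≤ M * Ecd N α v a := by
    calc (∫ x in Set.Ioc (0:ℝ) 1, (v x - vbar) ^ 2)
        ≤ ∫ x in Set.Ioc (0:ℝ) 1, (v x - a 2) ^ 2 := hB
      _ ≤ M * ∫ x in Set.Ioc (0:ℝ) 1,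
            (a 2 - v x) ^ 2 / |((2:ℕ):ℝ) - x| ^ (1 + 2 * α) := hTle 2 h2mem
      _ ≤ M * Ecd N α v a := mul_le_mul_of_nonneg_left hT2le hM0.le
  have hright : (∑ k ∈ Finset.Icc 2 (N + 1), (a k - vbar) ^ 2) ≤ M * Ecd N α v a := by
    rw [Ecd, Finset.mul_sum]
    apply Finset.sum_le_sum
    intro k hk
    exact (hA k).trans (hTle k hk)
  -- nonnegativity of Ecc and Edd
  have hEcc_nn : 0 ≤ Ecc α v := by
    apply setIntegral_nonneg measurableSet_Ioc
    intro x _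
    apply setIntegral_nonneg measurableSet_Ioc
    intro y _
    exact div_nonneg (sq_nonneg _) (Real.rpow_nonneg (abs_nonneg _) _)
  have hEdd_nn : 0 ≤ Edd N α a := by
    apply Finset.sum_nonneg
    intro i _
    apply Finset.sum_nonneg
    intro j _
    split_ifs
    · exact le_refl 0
    · exact div_nonneg (sq_nonneg _) (Real.rpow_nonneg (abs_nonneg _) _)
  calc (∫ x in Set.Ioc (0 : ℝ) 1, (v x - ∫ y in Set.Ioc (0 : ℝ) 1, v y) ^ 2) +
          (∑ k ∈ Finset.Icc 2 (N + 1), (a k - ∫ x in Set.Ioc (0 : ℝ) 1, v x) ^ 2)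
      ≤ M * Ecd N α v a + M * Ecd N α v a := add_le_add hleft hright
    _ = M * (2 * Ecd N α v a) := by ring
    _ ≤ M * (Ecc α v + 2 * Ecd N α v a + Edd N α a) := by nlinarith
end

section
/- Norm equivalence: there exist constants c₀, C₀ > 0 depending only on α and N such that c₀(‖v‖²_{H^α(0,1)} + Σ_{k=2}^{N+1}|a_k|²) ≤ ‖u‖²_{L²(T,μ)} + E_α(u) ≤ C₀(‖v‖²_{H^α(0,1)} + Σ_{k=2}^{N+1}|a_k|²), where ‖u‖²_{L²(T,μ)} = ‖v‖²_{L²(0,1)} + Σ_{k=2}^{N+1}|a_k|². -/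
open Finset Set MeasureTheory

/-- Norm equivalence: there are `c₀, C₀ > 0`, depending only on `α` and `N`, with
`c₀(‖v‖²_{H^α} + Σ|a_k|²) ≤ ‖u‖²_{L²(T,μ)} + E_α(u) ≤ C₀(‖v‖²_{H^α} + Σ|a_k|²)`,
where `‖u‖²_{L²(T,μ)} = ‖v‖²_{L²(0,1)} + Σ|a_k|²`. -/
theorem stmt_12 (N : ℕ) (hN : 2 ≤ N) (α : ℝ) (hα : 0 < α) (hα1 : α < 1) :
    ∃ c₀ C₀ : ℝ, 0 < c₀ ∧ 0 < C₀ ∧ ∀ (v : ℝ → ℝ) (a : ℕ → ℝ),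
      IntegrableOn v (Set.Ioc (0 : ℝ) 1) →
      IntegrableOn (fun x => (v x) ^ 2) (Set.Ioc (0 : ℝ) 1) →
      c₀ * (((∫ x in Set.Ioc (0 : ℝ) 1, (v x) ^ 2) + Ecc α v) +
            ∑ k ∈ Finset.Icc 2 (N + 1), (a k) ^ 2) ≤
          ((∫ x in Set.Ioc (0 : ℝ) 1, (v x) ^ 2) + ∑ k ∈ Finset.Icc 2 (N + 1), (a k) ^ 2) +
            (Ecc α v + 2 * Ecd N α v a + Edd N α a) ∧
      ((∫ x in Set.Ioc (0 : ℝ) 1, (v x) ^ 2) + ∑ k ∈ Finset.Icc 2 (N + 1), (a k) ^ 2) +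
            (Ecc α v + 2 * Ecd N α v a + Edd N α a) ≤
        C₀ * (((∫ x in Set.Ioc (0 : ℝ) 1, (v x) ^ 2) + Ecc α v) +
          ∑ k ∈ Finset.Icc 2 (N + 1), (a k) ^ 2) := by
  have hN' : (2 : ℝ) ≤ (N : ℝ) := by exact_mod_cast hN
  refine ⟨1, 5 + 4 * N, one_pos, by positivity, fun v a hv hv2 => ?_⟩
  set I := ∫ x in Set.Ioc (0 : ℝ) 1, (v x) ^ 2 with hIdef
  set S := ∑ k ∈ Finset.Icc 2 (N + 1), (a k) ^ 2 with hSdef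
  have hI0 : 0 ≤ I := integral_nonneg fun x => sq_nonneg _
  have hS0 : 0 ≤ S := Finset.sum_nonneg fun k _ => sq_nonneg _
  have hEcc : 0 ≤ Ecc α v :=
    integral_nonneg fun x => integral_nonneg fun y => by positivity
  have hEcd0 : 0 ≤ Ecd N α v a :=
    Finset.sum_nonneg fun k _ => integral_nonneg fun x => by positivity
  have hEdd0 : 0 ≤ Edd N α a := by
    refine Finset.sum_nonneg fun i _ => Finset.sum_nonneg fun j _ => ?_
    split <;> positivity
  have hcard : (Finset.Icc 2 (N + 1)).card = N := by
    rw [Nat.card_Icc]; omega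
  -- bound on Ecd
  have key : ∀ k ∈ Finset.Icc 2 (N + 1),
      (∫ x in Set.Ioc (0 : ℝ) 1, (a k - v x) ^ 2 / |(k : ℝ) - x| ^ (1 + 2 * α)) ≤
        2 * (a k) ^ 2 + 2 * I := by
    intro k hk
    have hk2 : (2 : ℝ) ≤ (k : ℝ) := by exact_mod_cast (Finset.mem_Icc.mp hk).1
    have hintc : IntegrableOn (fun _ : ℝ => 2 * (a k) ^ 2) (Set.Ioc (0 : ℝ) 1) := by
      apply (integrableOn_const_iff (C := 2 * (a k) ^ 2)).mpr
      right; simp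
    have hint : IntegrableOn (fun x => 2 * (a k) ^ 2 + 2 * (v x) ^ 2) (Set.Ioc (0 : ℝ) 1) :=
      hintc.add (hv2.const_mul 2)
    have hle : ∀ x ∈ Set.Ioc (0 : ℝ) 1,
        (a k - v x) ^ 2 / |(k : ℝ) - x| ^ (1 + 2 * α) ≤ 2 * (a k) ^ 2 + 2 * (v x) ^ 2 := by
      intro x hx
      have hd : (1 : ℝ) ≤ |(k : ℝ) - x| := by
        rw [abs_of_nonneg (by linarith [hx.2])]; linarith [hx.2]
      have hd' : (1 : ℝ) ≤ |(k : ℝ) - x| ^ (1 + 2 * α) :=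
        Real.one_le_rpow hd (by linarith)
      calc (a k - v x) ^ 2 / |(k : ℝ) - x| ^ (1 + 2 * α) ≤ (a k - v x) ^ 2 :=
            div_le_self (sq_nonneg _) hd'
        _ ≤ 2 * (a k) ^ 2 + 2 * (v x) ^ 2 := by nlinarith [sq_nonneg (a k + v x)]
    have hmono := integral_mono_of_nonneg (μ := volume.restrict (Set.Ioc (0 : ℝ) 1))
      (f := fun x => (a k - v x) ^ 2 / |(k : ℝ) - x| ^ (1 + 2 * α))
      (g := fun x => 2 * (a k) ^ 2 + 2 * (v x) ^ 2)
      (Filter.Eventually.of_forall fun x => by positivity) hint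
      ((ae_restrict_iff' measurableSet_Ioc).mpr (Filter.Eventually.of_forall hle))
    have hcalc : (∫ x in Set.Ioc (0 : ℝ) 1, (2 * (a k) ^ 2 + 2 * (v x) ^ 2)) =
        2 * (a k) ^ 2 + 2 * I := by
      rw [integral_add hintc (hv2.const_mul 2), integral_const, integral_const_mul]
      simp [Real.volume_Ioc]
      exact hIdef.symm
    linarith [hmono, hcalc.le, hcalc.ge]
  have hEcd : Ecd N α v a ≤ 2 * S + 2 * N * I := by
    calc Ecd N α v a ≤ ∑ k ∈ Finset.Icc 2 (N + 1), (2 * (a k) ^ 2 + 2 * I) :=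
          Finset.sum_le_sum key
      _ = 2 * S + 2 * N * I := by
          rw [Finset.sum_add_distrib, Finset.sum_const, hcard, ← Finset.mul_sum, ← hSdef,
            nsmul_eq_mul]
          ring
  -- bound on Edd
  have hEdd : Edd N α a ≤ 4 * N * S := by
    have keyd : ∀ i ∈ Finset.Icc 2 (N + 1), ∀ j ∈ Finset.Icc 2 (N + 1),
        (if i = j then (0:ℝ) else (a i - a j) ^ 2 / |(i : ℝ) - (j : ℝ)| ^ (1 + 2 * α)) ≤
          2 * (a i) ^ 2 + 2 * (a j) ^ 2 := by
      intro i _ j _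
      split
      · positivity
      · rename_i hij
        have hz : (i : ℤ) ≠ (j : ℤ) := by exact_mod_cast hij
        have h1 : (1 : ℤ) ≤ |(i : ℤ) - (j : ℤ)| := Int.one_le_abs (sub_ne_zero.mpr hz)
        have hd : (1 : ℝ) ≤ |(i : ℝ) - (j : ℝ)| := by
          have : ((1 : ℤ) : ℝ) ≤ (|(i : ℤ) - (j : ℤ)| : ℝ) := by exact_mod_cast h1
          push_cast at this
          exact this
        have hd' : (1 : ℝ) ≤ |(i : ℝ) - (j : ℝ)| ^ (1 + 2 * α) :=
          Real.one_le_rpow hd (by linarith)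
        calc (a i - a j) ^ 2 / |(i : ℝ) - (j : ℝ)| ^ (1 + 2 * α) ≤ (a i - a j) ^ 2 :=
              div_le_self (sq_nonneg _) hd'
          _ ≤ 2 * (a i) ^ 2 + 2 * (a j) ^ 2 := by nlinarith [sq_nonneg (a i + a j)]
    calc Edd N α a ≤ ∑ i ∈ Finset.Icc 2 (N + 1), ∑ j ∈ Finset.Icc 2 (N + 1),
          (2 * (a i) ^ 2 + 2 * (a j) ^ 2) :=
          Finset.sum_le_sum fun i hi => Finset.sum_le_sum (keyd i hi)
      _ = 4 * N * S := by
          simp only [Finset.sum_add_distrib, Finset.sum_const, hcard, nsmul_eq_mul,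
            ← Finset.mul_sum, ← hSdef]
          ring
  constructor
  · nlinarith
  · nlinarith
end
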